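/- Let (Ω, S, ν) be a finite non-atomic measure space, A_1, …, A_n measurable, and ξ > 0. For each nonempty Q ⊆ [n] let S_Q = (⋂_{i∈Q} A_i) \ (⋃_{i∉Q} A_i), and let E_{Q,ξ} ⊆ S_Q be measurable with ν(E_{Q,ξ}) = ξ·⌊ν(S_Q)/ξ⌋. Define A_{k,ξ} = ⋃_{Q : k∈Q} E_{Q,ξ}. Then for every nonempty Q ⊆ [n], 0 ≤ ν(⋃_{i∈Q} A_i) − ν(⋃_{i∈Q} A_{i,ξ}) < ξ·(2^n − 2^{n−|Q|}). -/

import Mathlib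

open MeasureTheory

theorem stmt_7 {Ω : Type*} [MeasurableSpace Ω] (ν : Measure Ω) [IsFiniteMeasure ν]
    (hna : ∀ A : Set Ω, MeasurableSet A → 0 < ν A →
      ∃ B ⊆ A, MeasurableSet B ∧ 0 < ν B ∧ ν B < ν A)
    (n : ℕ) (A : Fin n → Set Ω) (hA : ∀ k, MeasurableSet (A k))
    (ξ : ℝ) (hξ : 0 < ξ)
    (S : Finset (Fin n) → Set Ω)
    (hS : ∀ Q : Finset (Fin n), Q.Nonempty →
      S Q = (⋂ i ∈ Q, A i) \ (⋃ i ∈ Qᶜ, A i))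
    (E : Finset (Fin n) → Set Ω)
    (hEsub : ∀ Q : Finset (Fin n), Q.Nonempty → E Q ⊆ S Q)
    (hEmeas : ∀ Q : Finset (Fin n), Q.Nonempty → MeasurableSet (E Q))
    (hEval : ∀ Q : Finset (Fin n), Q.Nonempty →
      ν (E Q) = ENNReal.ofReal (ξ * ⌊(ν (S Q)).toReal / ξ⌋))
    (A' : Fin n → Set Ω)
    (hA' : ∀ k, A' k = ⋃ Q ∈ {Q : Finset (Fin n) | k ∈ Q}, E Q) :
    ∀ Q : Finset (Fin n), Q.Nonempty →
      ν (⋃ i ∈ Q, A' i) ≤ ν (⋃ i ∈ Q, A i) ∧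
      (ν (⋃ i ∈ Q, A i)).toReal - (ν (⋃ i ∈ Q, A' i)).toReal
        < ξ * ((2 : ℝ) ^ n - 2 ^ (n - Q.card)) := by
  classical
  intro Q hQ
  -- U' ⊆ U
  have hU'subU : (⋃ i ∈ Q, A' i) ⊆ ⋃ i ∈ Q, A i := by
    intro x hx
    simp only [Set.mem_iUnion] at hx ⊢
    obtain ⟨i, hi, hx⟩ := hx
    rw [hA' i] at hx
    simp only [Set.mem_iUnion, Set.mem_setOf_eq] at hx
    obtain ⟨P, hiP, hxE⟩ := hx
    have hPne : P.Nonempty := ⟨i, hiP⟩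
    have hmem := hEsub P hPne hxE
    rw [hS P hPne] at hmem
    have hxAi : x ∈ A i := by
      have := hmem.1
      simp only [Set.mem_iInter] at this
      exact this i hiP
    exact ⟨i, hi, hxAi⟩
  refine ⟨measure_mono hU'subU, ?_⟩
  set Ps : Finset (Finset (Fin n)) := Finset.univ.filter (fun P => (P ∩ Q).Nonempty) with hPs
  have hPsmem : ∀ P, P ∈ Ps ↔ (P ∩ Q).Nonempty := by
    intro P; simp [hPs]
  have hPsne : ∀ P ∈ Ps, P.Nonempty := by
    intro P hP
    obtain ⟨i, hi⟩ := (hPsmem P).mp hP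
    exact ⟨i, (Finset.mem_inter.mp hi).1⟩
  have hQPs : Q ∈ Ps := by
    rw [hPsmem]
    obtain ⟨i, hi⟩ := hQ
    exact ⟨i, Finset.mem_inter.mpr ⟨hi, hi⟩⟩
  -- covering
  have hUsub : (⋃ i ∈ Q, A i) ⊆ (⋃ i ∈ Q, A' i) ∪ ⋃ P ∈ Ps, (S P \ E P) := by
    intro x hx
    simp only [Set.mem_iUnion] at hx
    obtain ⟨i, hiQ, hxA⟩ := hx
    set P : Finset (Fin n) := Finset.univ.filter (fun j => x ∈ A j) with hPdef
    have hiP : i ∈ P := by simp [hPdef, hxA]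
    have hPne : P.Nonempty := ⟨i, hiP⟩
    have hPPs : P ∈ Ps := (hPsmem P).mpr ⟨i, Finset.mem_inter.mpr ⟨hiP, hiQ⟩⟩
    have hxS : x ∈ S P := by
      rw [hS P hPne]
      constructor
      · simp only [Set.mem_iInter]
        intro j hj
        simpa [hPdef] using hj
      · simp only [Set.mem_iUnion, not_exists]
        intro j hj hxj
        simp only [hPdef, Finset.mem_compl, Finset.mem_filter, Finset.mem_univ,
          true_and] at hj
        exact hj hxj
    by_cases hxE : x ∈ E P
    · left
      simp only [Set.mem_iUnion]
      refine ⟨i, hiQ, ?_⟩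
      rw [hA' i]
      simp only [Set.mem_iUnion, Set.mem_setOf_eq]
      exact ⟨P, hiP, hxE⟩
    · right
      simp only [Set.mem_iUnion]
      exact ⟨P, hPPs, hxS, hxE⟩
  have hmain : ν (⋃ i ∈ Q, A i) ≤ ν (⋃ i ∈ Q, A' i) + ∑ P ∈ Ps, ν (S P \ E P) :=
    le_trans (measure_mono hUsub) (le_trans (measure_union_le _ _)
      (add_le_add (le_refl _) (measure_biUnion_finset_le _ _)))
  -- each term in real
  have hfloor_nonneg : ∀ P : Finset (Fin n), (0:ℝ) ≤ ξ * ⌊(ν (S P)).toReal / ξ⌋ := by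
    intro P
    apply mul_nonneg hξ.le
    have : (0:ℤ) ≤ ⌊(ν (S P)).toReal / ξ⌋ :=
      Int.floor_nonneg.mpr (div_nonneg ENNReal.toReal_nonneg hξ.le)
    exact_mod_cast this
  have hterm : ∀ P ∈ Ps, (ν (S P \ E P)).toReal < ξ := by
    intro P hP
    have hPne := hPsne P hP
    have hdiff : ν (S P \ E P) = ν (S P) - ν (E P) :=
      measure_diff (hEsub P hPne) (hEmeas P hPne).nullMeasurableSet (measure_ne_top ν _)
    rw [hdiff, ENNReal.toReal_sub_of_le (measure_mono (hEsub P hPne)) (measure_ne_top ν _)]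
    rw [hEval P hPne, ENNReal.toReal_ofReal (hfloor_nonneg P)]
    set t : ℝ := (ν (S P)).toReal with ht
    have h1 : t / ξ - 1 < ⌊t / ξ⌋ := Int.sub_one_lt_floor _
    have h2 : t / ξ * ξ = t := div_mul_cancel₀ t (ne_of_gt hξ)
    nlinarith [h1, h2]
  -- sum bound
  have hsum : ∑ P ∈ Ps, (ν (S P \ E P)).toReal < ξ * Ps.card := by
    have := Finset.sum_lt_sum_of_nonempty ⟨Q, hQPs⟩ hterm
    simpa [Finset.sum_const, nsmul_eq_mul, mul_comm] using this
  -- card computation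
  have hcard : (Ps.card : ℝ) = (2:ℝ) ^ n - 2 ^ (n - Q.card) := by
    have hcompl : Finset.univ.filter (fun P : Finset (Fin n) => ¬(P ∩ Q).Nonempty)
        = Qᶜ.powerset := by
      ext P
      simp only [Finset.mem_filter, Finset.mem_univ, true_and, Finset.mem_powerset,
        Finset.not_nonempty_iff_eq_empty, Finset.eq_empty_iff_forall_notMem,
        Finset.mem_inter, Finset.subset_iff, Finset.mem_compl, not_and]
    have htotal : Ps.card + (Qᶜ.powerset).card = 2 ^ n := by
      rw [← hcompl, Finset.card_filter_add_card_filter_not]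
      simp [Finset.card_univ]
    have hpow : (Qᶜ.powerset).card = 2 ^ (n - Q.card) := by
      rw [Finset.card_powerset, Finset.card_compl]
      simp
    have hle : 2 ^ (n - Q.card) ≤ 2 ^ n := Nat.pow_le_pow_right (by norm_num) (Nat.sub_le _ _)
    have : Ps.card = 2 ^ n - 2 ^ (n - Q.card) := by omega
    rw [this, Nat.cast_sub hle]
    push_cast
    ring
  -- conclude
  have hfin : ν (⋃ i ∈ Q, A' i) + ∑ P ∈ Ps, ν (S P \ E P) ≠ ⊤ := by
    refine ENNReal.add_ne_top.mpr ⟨measure_ne_top ν _, ?_⟩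
    exact (ENNReal.sum_lt_top.mpr (fun P _ => measure_lt_top ν _)).ne
  have hreal : (ν (⋃ i ∈ Q, A i)).toReal ≤
      (ν (⋃ i ∈ Q, A' i)).toReal + ∑ P ∈ Ps, (ν (S P \ E P)).toReal := by
    have := ENNReal.toReal_mono hfin hmain
    rwa [ENNReal.toReal_add (measure_ne_top ν _)
      ((ENNReal.sum_lt_top.mpr (fun P _ => measure_lt_top ν _)).ne),
      ENNReal.toReal_sum (fun P _ => measure_ne_top ν _)] at this
  calc (ν (⋃ i ∈ Q, A i)).toReal - (ν (⋃ i ∈ Q, A' i)).toReal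
      ≤ ∑ P ∈ Ps, (ν (S P \ E P)).toReal := by linarith
    _ < ξ * Ps.card := hsum
    _ = ξ * ((2:ℝ) ^ n - 2 ^ (n - Q.card)) := by rw [hcard]
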